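/- arXiv:2605.15902 — 2 statements merged into one kernel-verified Lean document; each statement's English description precedes it below -/
import Mathlib

section
/- Let p(y|θ) = h(y) exp{θy − ψ(θ)} be a natural exponential family and π a prior density on θ. Define f(y) = ∫ p(y|θ) π(θ) dθ. If f(y) > 0, h(y) > 0, and differentiation under the integral is justified near y, then E[θ | Y = y] = d/dy log(f(y)/h(y)) = d/dy log f(y) − d/dy log h(y). -/
open MeasureTheory Real

/-- Natural-exponential-family Tweedie identity: the posterior mean of the
natural parameter is the marginal score corrected for the base measure. -/
theorem tweedie_nef
    (h : ℝ → ℝ) (ψ : ℝ → ℝ)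
    (p : ℝ → ℝ → ℝ)
    (hp : ∀ y θ, p y θ = h y * Real.exp (θ * y - ψ θ))
    (pr : ℝ → ℝ) (hpr_nonneg : ∀ θ, 0 ≤ pr θ)
    (hpr_int : ∫ θ : ℝ, pr θ = 1)
    (y : ℝ)
    (f : ℝ → ℝ)
    (hf : ∀ u, f u = ∫ θ : ℝ, p u θ * pr θ)
    (hfy : 0 < f y) (hhy : 0 < h y)
    (hfdiff : DifferentiableAt ℝ f y)
    (hhdiff : DifferentiableAt ℝ h y)
    (U : Set ℝ) (hU : IsOpen U) (hyU : y ∈ U)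
    (H : ℝ → ℝ) (hH : Integrable H)
    (hdom : ∀ u ∈ U, ∀ᵐ θ : ℝ,
      |θ * Real.exp (θ * u - ψ θ) * pr θ| ≤ H θ) :
    (∫ θ : ℝ, θ * (p y θ * pr θ)) / f y
        = deriv (fun u => Real.log (f u / h u)) y
      ∧ (∫ θ : ℝ, θ * (p y θ * pr θ)) / f y
        = deriv (fun u => Real.log (f u)) y - deriv (fun u => Real.log (h u)) y := by
  -- the "reduced" integrand and marginal
  set e : ℝ → ℝ → ℝ := fun u θ => Real.exp (θ * u - ψ θ) * pr θ with he
  set g : ℝ → ℝ := fun u => ∫ θ : ℝ, e u θ with hg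
  -- f u = h u * g u for all u
  have hfu : ∀ u, f u = h u * g u := by
    intro u
    rw [hf, hg, ← integral_const_mul]
    congr 1; funext θ; rw [hp, he]; ring
  -- integrability of e y
  have hint0 : Integrable (fun θ : ℝ => h y * e y θ) := by
    by_contra hc
    have : f y = 0 := by
      rw [hf, ← integral_undef hc]
      congr 1; funext θ; rw [hp, he]; ring
    linarith
  have hinte : Integrable (e y) := by
    have h2 := hint0.const_mul (h y)⁻¹
    simpa [← mul_assoc, inv_mul_cancel₀ hhy.ne'] using h2
  -- derivative under the integral sign
  obtain ⟨ε, εpos, hball⟩ := Metric.mem_nhds_iff.mp (hU.mem_nhds hyU)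
  have hScount : (Metric.ball y ε ∩ Set.range ((↑) : ℚ → ℝ)).Countable :=
    (Set.countable_range _).mono Set.inter_subset_right
  have haeS : ∀ᵐ θ : ℝ, ∀ u ∈ Metric.ball y ε ∩ Set.range ((↑) : ℚ → ℝ),
      |θ * Real.exp (θ * u - ψ θ) * pr θ| ≤ H θ :=
    (ae_ball_iff hScount).mpr fun u hu => hdom u (hball hu.1)
  have hbound : ∀ᵐ θ : ℝ, ∀ x ∈ Metric.ball y ε,
      ‖θ * Real.exp (θ * x - ψ θ) * pr θ‖ ≤ H θ := by
    filter_upwards [haeS] with θ hθ x hx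
    have hcont : Continuous fun u : ℝ => |θ * Real.exp (θ * u - ψ θ) * pr θ| := by
      fun_prop
    have hclosed : IsClosed {u : ℝ | |θ * Real.exp (θ * u - ψ θ) * pr θ| ≤ H θ} :=
      isClosed_le hcont continuous_const
    have hdense : Metric.ball y ε ⊆
        closure (Metric.ball y ε ∩ Set.range ((↑) : ℚ → ℝ)) :=
      Rat.denseRange_cast.open_subset_closure_inter Metric.isOpen_ball
    rw [Real.norm_eq_abs]
    exact closure_minimal hθ hclosed (hdense hx)
  have hFmeas : ∀ᶠ x in nhds y, AEStronglyMeasurable (e x) (volume : Measure ℝ) := by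
    filter_upwards with x
    have : e x = fun θ => Real.exp (θ * (x - y)) * e y θ := by
      funext θ; rw [he]; simp only []
      rw [← mul_assoc, ← Real.exp_add]; ring_nf
    rw [this]
    exact ((Real.continuous_exp.comp (by fun_prop)).aestronglyMeasurable).mul
      hinte.aestronglyMeasurable
  have hF'meas : AEStronglyMeasurable (fun θ : ℝ => θ * Real.exp (θ * y - ψ θ) * pr θ)
      (volume : Measure ℝ) := by
    have : (fun θ : ℝ => θ * Real.exp (θ * y - ψ θ) * pr θ) = fun θ => θ * e y θ := by
      funext θ; rw [he]; ring
    rw [this]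
    exact (measurable_id.aestronglyMeasurable).mul hinte.aestronglyMeasurable
  have hdiffae : ∀ᵐ θ : ℝ, ∀ x ∈ Metric.ball y ε,
      HasDerivAt (fun u => e u θ) (θ * Real.exp (θ * x - ψ θ) * pr θ) x := by
    filter_upwards with θ x _
    have h1 : HasDerivAt (fun u : ℝ => θ * u - ψ θ) θ x := by
      simpa using ((hasDerivAt_id x).const_mul θ).sub_const (ψ θ)
    have h2 := (h1.exp).mul_const (pr θ)
    rw [show θ * Real.exp (θ * x - ψ θ) * pr θ = Real.exp (θ * x - ψ θ) * θ * pr θ by ring]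
    exact h2
  have hkey := (hasDerivAt_integral_of_dominated_loc_of_deriv_le (Metric.ball_mem_nhds y εpos) hFmeas hinte
    hF'meas hbound hH hdiffae).2
  -- hkey : HasDerivAt g (∫ θ, θ * exp (θ*y - ψ θ) * pr θ) y
  set I : ℝ := ∫ θ : ℝ, θ * Real.exp (θ * y - ψ θ) * pr θ with hI
  have hgderiv : HasDerivAt g I y := hkey
  -- numerator of the posterior mean
  have hnum : (∫ θ : ℝ, θ * (p y θ * pr θ)) = h y * I := by
    rw [hI, ← integral_const_mul]
    congr 1; funext θ; rw [hp]; ring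
  have hgy : 0 < g y := by
    have := hfu y
    nlinarith [hfu y]
  -- derivative of f
  have hhd : HasDerivAt h (deriv h y) y := hhdiff.hasDerivAt
  have hfd : HasDerivAt f (deriv h y * g y + h y * I) y := by
    have : HasDerivAt (fun u => h u * g u) (deriv h y * g y + h y * I) y :=
      hhd.mul hgderiv
    have heq : f = fun u => h u * g u := funext hfu
    rw [heq]; exact this
  have hfy0 : f y ≠ 0 := hfy.ne'
  have hhy0 : h y ≠ 0 := hhy.ne'
  have hgy0 : g y ≠ 0 := hgy.ne'
  -- derivative of log f
  have hlogf : deriv (fun u => Real.log (f u)) y = (deriv h y * g y + h y * I) / f y :=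
    (hfd.log hfy0).deriv
  have hlogh : deriv (fun u => Real.log (h u)) y = deriv h y / h y := (hhd.log hhy0).deriv
  -- derivative of log (f/h)
  have hdiv : HasDerivAt (fun u => f u / h u)
      (((deriv h y * g y + h y * I) * h y - f y * deriv h y) / (h y ^ 2)) y :=
    hfd.div hhd hhy0
  have hfh0 : f y / h y ≠ 0 := div_ne_zero hfy0 hhy0
  have hlogfh : deriv (fun u => Real.log (f u / h u)) y
      = (((deriv h y * g y + h y * I) * h y - f y * deriv h y) / (h y ^ 2)) / (f y / h y) :=
    (hdiv.log hfh0).deriv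
  have hfyval : f y = h y * g y := hfu y
  constructor
  · rw [hnum, hlogfh, hfyval]
    field_simp
    ring
  · rw [hnum, hlogf, hlogh, hfyval]
    field_simp
    ring
end

section
/- For a natural exponential family p(y|θ) = h(y)exp{θy − ψ(θ)}, if the prior is conjugate, π(θ) ∝ exp{τθ − nψ(θ)} with n > 0, and the posterior-kernel boundary terms vanish, then the posterior mean of μ = ψ′(θ) is E[μ | Y = y] = (τ + y)/(n + 1). -/
open MeasureTheory Real Filter

/-- Conjugate-prior special case of the expectation-parameter identity:
with `π(θ) ∝ exp{τθ − nψ(θ)}`, `n > 0`, and vanishing posterior-kernel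
boundary terms, `E[μ | Y = y] = (τ + y)/(n + 1)` where `μ = ψ'(θ)`. -/
theorem nef_conjugate_posterior_mean
    (ψ : ℝ → ℝ) (hψ : Differentiable ℝ ψ)
    (τ n : ℝ) (hn : 0 < n)
    (c : ℝ) (hc : 0 < c)
    (pr : ℝ → ℝ) (hpr : ∀ θ, pr θ = c * Real.exp (τ * θ - n * ψ θ))
    (hpr_int : ∫ θ : ℝ, pr θ = 1)
    (y : ℝ)
    -- the posterior kernel `exp{θ(y+τ) − (n+1)ψ(θ)}`
    (k : ℝ → ℝ) (hk : ∀ θ, k θ = Real.exp (θ * (y + τ) - (n + 1) * ψ θ))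
    (Z : ℝ) (hZ : Z = ∫ θ : ℝ, k θ) (hZpos : 0 < Z)
    (hk_int : Integrable k)
    (hμk_int : Integrable (fun θ => deriv ψ θ * k θ))
    -- boundary terms vanish at the endpoints of the natural parameter space
    (hbot : Tendsto k atBot (nhds 0)) (htop : Tendsto k atTop (nhds 0)) :
    (∫ θ : ℝ, deriv ψ θ * k θ) / Z = (τ + y) / (n + 1) := by
  set k' : ℝ → ℝ := fun θ => ((y + τ) - (n + 1) * deriv ψ θ) * k θ with hk'def
  have hderiv : ∀ θ, HasDerivAt k (k' θ) θ := by
    intro θ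
    have h1 : HasDerivAt (fun θ : ℝ => θ * (y + τ) - (n + 1) * ψ θ)
        ((y + τ) - (n + 1) * deriv ψ θ) θ := by
      simpa [Pi.sub_def] using ((hasDerivAt_id θ).mul_const (y + τ)).sub
        (((hψ θ).hasDerivAt).const_mul (n + 1))
    have := h1.exp
    have heq : (fun θ : ℝ => Real.exp (θ * (y + τ) - (n + 1) * ψ θ)) = k := by
      funext t; rw [hk t]
    rw [heq] at this
    simpa [hk'def, hk θ, mul_comm] using this
  have hk'_int : Integrable k' := by
    have : k' = fun θ => (y + τ) * k θ - (n + 1) * (deriv ψ θ * k θ) := by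
      funext θ; simp [hk'def]; ring
    rw [this]
    exact (hk_int.const_mul _).sub (hμk_int.const_mul _)
  have hint0 : ∫ θ, k' θ = 0 := by
    have := integral_of_hasDerivAt_of_tendsto hderiv hk'_int hbot htop
    simpa using this
  have hsplit : ∫ θ, k' θ = (y + τ) * Z - (n + 1) * ∫ θ, deriv ψ θ * k θ := by
    have : k' = fun θ => (y + τ) * k θ - (n + 1) * (deriv ψ θ * k θ) := by
      funext θ; simp [hk'def]; ring
    rw [this, integral_sub (hk_int.const_mul _) (hμk_int.const_mul _),
      integral_const_mul, integral_const_mul, hZ]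
  have hkey : (n + 1) * ∫ θ, deriv ψ θ * k θ = (y + τ) * Z := by
    rw [hint0] at hsplit; linarith
  have hn1 : (n : ℝ) + 1 ≠ 0 := by linarith
  field_simp
  linarith [hkey]
end
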